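/- Let E be a Leja sequence for the unit disk and n ∈ ℕ. Then the set of real parts {Re(e_k) : 0 ≤ k ≤ 2^{n+1}−1} equals the Chebyshev–Lobatto set 𝓛_{2^n} = {cos(jπ/2^n) : j = 0,…,2^n}; in particular it has exactly 2^n + 1 elements. -/

import Mathlib

open Finset Real

open Polynomial

lemma prod_nthRoots_sub (N : ℕ) (hN : 0 < N) (z : ℂ) :
    ∏ x ∈ nthRootsFinset N (1 : ℂ), (z - x) = z ^ N - 1 := by
  have hprim := Complex.isPrimitiveRoot_exp N hN.ne'
  have h := congrArg (Polynomial.eval z) (Polynomial.X_pow_sub_one_eq_prod hN hprim)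
  rw [Polynomial.eval_prod] at h
  simpa using h.symm

lemma eq_neg_one_of (x : ℂ) (hx : ‖x‖ ≤ 1) (h2 : 2 ≤ ‖x - 1‖) :
    x = -1 := by
  have h4 : 4 ≤ Complex.normSq (x - 1) := by
    have := Complex.sq_norm (x - 1)
    nlinarith [norm_nonneg (x-1)]
  have h1 : Complex.normSq x ≤ 1 := by
    have := Complex.sq_norm x
    nlinarith [norm_nonneg x]
  have hre : x.re = -1 ∧ x.im = 0 := by
    simp [Complex.normSq_apply] at h4 h1
    constructor <;> nlinarith
  rw [Complex.ext_iff]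
  simp [hre.1, hre.2]

lemma leja_struct : ∀ n : ℕ, ∀ K : Finset ℕ, (∀ k ∈ K, n ≤ k) → ∀ h : ℕ → ℂ,
    h 0 = 1 → (∀ m, ‖h m‖ ≤ 1) →
    (∀ j, 1 ≤ j → j < 2 ^ n → ∀ z : ℂ, ‖z‖ ≤ 1 →
      (∏ k ∈ K, ‖z ^ 2 ^ k + 1‖) * ∏ m ∈ Finset.range j, ‖z - h m‖ ≤
      (∏ k ∈ K, ‖h j ^ 2 ^ k + 1‖) *
        ∏ m ∈ Finset.range j, ‖h j - h m‖) →
    (Finset.range (2 ^ n)).image h = nthRootsFinset (2 ^ n) (1 : ℂ) := by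
  intro n
  induction n with
  | zero =>
    intro K hK h h0 hb hmax
    have : nthRootsFinset (2 ^ 0) (1 : ℂ) = {1} := by
      ext x
      simp [Polynomial.mem_nthRootsFinset (by norm_num : (0:ℕ) < 2 ^ 0) (1 : ℂ)]
    rw [this]
    ext x
    simp [h0, eq_comm]
  | succ n IH =>
    intro K hK h h0 hb hmax
    set d := 2 ^ n with hd
    have hd0 : 0 < d := Nat.pow_pos (by norm_num)
    have hdd : 2 ^ (n + 1) = d + d := by rw [pow_succ]; omega
    have hprim := Complex.isPrimitiveRoot_exp d hd0.ne'
    -- first half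
    have IH1 : (Finset.range d).image h = nthRootsFinset d (1 : ℂ) :=
      IH K (fun k hk => Nat.le_of_succ_le (hK k hk)) h h0 hb
        (fun j h1 h2 z hz => hmax j h1 (by omega) z hz)
    have hcard : ((Finset.range d).image h).card = d := by
      rw [IH1, hprim.card_nthRootsFinset]
    have hinj : ∀ x ∈ Finset.range d, ∀ y ∈ Finset.range d, h x = h y → x = y := by
      have := Finset.injOn_of_card_image_eq (by rw [hcard, Finset.card_range])
      exact fun x hx y hy => this (by simpa using hx) (by simpa using hy)
    have hprod : ∀ z : ℂ, ∏ m ∈ Finset.range d, ‖z - h m‖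
        = ‖z ^ d - 1‖ := by
      intro z
      rw [← norm_prod]
      congr 1
      rw [← prod_nthRoots_sub d hd0 z, ← IH1, Finset.prod_image hinj]
    -- the special point w0 with w0^d = -1 and w0^(2^k) = 1 for k ∈ K
    set w0 : ℂ := Complex.exp ((π / d : ℝ) * Complex.I) with hw0
    have hw0abs : ‖w0‖ = 1 := Complex.norm_exp_ofReal_mul_I _
    have hw0d : w0 ^ d = -1 := by
      rw [hw0, ← Complex.exp_nat_mul]
      have : (d : ℂ) * (((π / d : ℝ) : ℂ) * Complex.I) = (π : ℂ) * Complex.I := by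
        have hdne : (d:ℂ) ≠ 0 := Nat.cast_ne_zero.mpr hd0.ne'
        push_cast
        field_simp
      rw [this, Complex.exp_pi_mul_I]
    have hpow1 : ∀ x : ℂ, x ^ d = -1 → ∀ k ∈ K, x ^ 2 ^ k = 1 := by
      intro x hx k hk
      have hkn : 2 ^ k = d * 2 ^ (k - n) := by
        rw [hd, ← pow_add]
        congr 1
        have := hK k hk
        omega
      have heven : Even (2 ^ (k - n)) := by
        rw [Nat.even_pow]
        exact ⟨even_two, by have := hK k hk; omega⟩
      rw [hkn, pow_mul, hx, heven.neg_one_pow]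
    -- rho
    set ρ : ℂ := h d with hρ
    have hρd : ρ ^ d = -1 := by
      have H := hmax d hd0 (by omega) w0 hw0abs.le
      rw [hprod w0, hprod ρ] at H
      have hL : (∏ k ∈ K, ‖w0 ^ 2 ^ k + 1‖) = 2 ^ K.card := by
        have h2' : ∀ k ∈ K, ‖w0 ^ 2 ^ k + 1‖ = 2 := by
          intro k hk
          rw [hpow1 w0 hw0d k hk]
          norm_num
        rw [Finset.prod_congr rfl h2', Finset.prod_const]
      have hw : ‖w0 ^ d - 1‖ = 2 := by
        rw [hw0d]
        norm_num
      have hbound : ∀ k ∈ K, ‖ρ ^ 2 ^ k + 1‖ ≤ 2 := by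
        intro k _
        calc ‖ρ ^ 2 ^ k + 1‖ ≤ ‖ρ ^ 2 ^ k‖ + ‖1‖ :=
              norm_add_le _ _
        _ ≤ 2 := by
              rw [norm_pow, norm_one]
              have : ‖ρ‖ ^ 2 ^ k ≤ 1 :=
                pow_le_one₀ (norm_nonneg ρ) (hb d)
              linarith
      have hR : (∏ k ∈ K, ‖ρ ^ 2 ^ k + 1‖) ≤ 2 ^ K.card := by
        calc (∏ k ∈ K, ‖ρ ^ 2 ^ k + 1‖) ≤ ∏ _k ∈ K, (2:ℝ) :=
              Finset.prod_le_prod (fun k _ => norm_nonneg _) hbound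
        _ = 2 ^ K.card := Finset.prod_const 2
      have h2 : 2 ≤ ‖ρ ^ d - 1‖ := by
        rw [hL, hw] at H
        by_contra hcon
        push_neg at hcon
        have hKpos : (0:ℝ) < 2 ^ K.card := by positivity
        nlinarith [norm_nonneg (ρ ^ d - 1),
          Finset.prod_nonneg (fun k (_ : k ∈ K) => norm_nonneg (ρ ^ 2 ^ k + 1))]
      have habsd : ‖ρ ^ d‖ ≤ 1 := by
        rw [norm_pow]
        exact pow_le_one₀ (norm_nonneg ρ) (hb d)
      exact eq_neg_one_of _ habsd h2
    have hρabs : ‖ρ‖ = 1 := by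
      have hpd : ‖ρ‖ ^ d = 1 := by
        rw [← norm_pow, hρd]
        norm_num
      by_contra hne
      have hlt : ‖ρ‖ < 1 := lt_of_le_of_ne (hb d) hne
      have := pow_lt_one₀ (norm_nonneg ρ) hlt hd0.ne'
      rw [hpd] at this
      exact absurd this (by norm_num)
    have hρ0 : ρ ≠ 0 := by
      intro hz
      rw [hz] at hρabs
      simp at hρabs
    set g : ℕ → ℂ := fun m => ρ⁻¹ * h (d + m) with hg
    have hgd : ∀ m, h (d + m) = ρ * g m := by
      intro m
      rw [hg]
      field_simp
    have hnK : n ∉ K := fun hn => absurd (hK n hn) (by omega)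
    have hρk : ∀ k ∈ K, ρ ^ 2 ^ k = 1 := hpow1 ρ hρd
    -- key algebraic transformation
    have key : ∀ j, j < d → ∀ w : ℂ,
        (∏ k ∈ K, ‖(ρ * w) ^ 2 ^ k + 1‖) *
          ∏ m ∈ Finset.range (d + j), ‖ρ * w - h m‖
        = (∏ k ∈ insert n K, ‖w ^ 2 ^ k + 1‖) *
            ∏ m ∈ Finset.range j, ‖w - g m‖ := by
      intro j hjd w
      rw [Finset.prod_range_add, hprod (ρ * w)]
      have e1 : ‖(ρ * w) ^ d - 1‖ = ‖w ^ d + 1‖ := by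
        rw [mul_pow, hρd]
        rw [show (-1 : ℂ) * w ^ d - 1 = -(w ^ d + 1) by ring, norm_neg]
      have e2 : ∀ i, ‖ρ * w - h (d + i)‖ = ‖w - g i‖ := by
        intro i
        rw [hgd i, show ρ * w - ρ * g i = ρ * (w - g i) by ring, norm_mul, hρabs, one_mul]
      have e3 : (∏ k ∈ K, ‖(ρ * w) ^ 2 ^ k + 1‖)
          = ∏ k ∈ K, ‖w ^ 2 ^ k + 1‖ := by
        apply Finset.prod_congr rfl
        intro k hk
        rw [mul_pow, hρk k hk, one_mul]
      rw [e1, e3, Finset.prod_congr rfl (fun i _ => e2 i), Finset.prod_insert hnK,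
        show 2 ^ n = d from rfl]
      ring
    have hstep : ∀ j, 1 ≤ j → j < d → ∀ w : ℂ, ‖w‖ ≤ 1 →
        (∏ k ∈ insert n K, ‖w ^ 2 ^ k + 1‖) *
          ∏ m ∈ Finset.range j, ‖w - g m‖ ≤
        (∏ k ∈ insert n K, ‖g j ^ 2 ^ k + 1‖) *
          ∏ m ∈ Finset.range j, ‖g j - g m‖ := by
      intro j hj1 hjd w hw
      have habsz : ‖ρ * w‖ ≤ 1 := by
        rw [norm_mul, hρabs, one_mul]
        exact hw
      have H := hmax (d + j) (by omega) (by omega) (ρ * w) habsz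
      rw [show h (d + j) = ρ * g j from hgd j] at H
      calc (∏ k ∈ insert n K, ‖w ^ 2 ^ k + 1‖) *
              ∏ m ∈ Finset.range j, ‖w - g m‖
          = (∏ k ∈ K, ‖(ρ * w) ^ 2 ^ k + 1‖) *
              ∏ m ∈ Finset.range (d + j), ‖ρ * w - h m‖ := (key j hjd w).symm
        _ ≤ (∏ k ∈ K, ‖(ρ * g j) ^ 2 ^ k + 1‖) *
              ∏ m ∈ Finset.range (d + j), ‖ρ * g j - h m‖ := H
        _ = (∏ k ∈ insert n K, ‖g j ^ 2 ^ k + 1‖) *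
              ∏ m ∈ Finset.range j, ‖g j - g m‖ := key j hjd (g j)
    have IH2 : (Finset.range d).image g = nthRootsFinset d (1 : ℂ) := by
      apply IH (insert n K)
      · intro k hk
        rcases Finset.mem_insert.mp hk with rfl | hk'
        · exact le_refl _
        · exact Nat.le_of_succ_le (hK k hk')
      · rw [hg]
        simp only []
        rw [show d + 0 = d from rfl]
        exact inv_mul_cancel₀ hρ0
      · intro m
        rw [hg]
        simp only [norm_mul, norm_inv, hρabs]
        simpa using hb (d + m)
      · exact hstep
    -- assembly
    have hsplit : (Finset.range (2 ^ (n + 1))).image h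
        = (Finset.range d).image h ∪ (Finset.range d).image (fun i => h (d + i)) := by
      ext x
      simp only [Finset.mem_image, Finset.mem_union, Finset.mem_range]
      constructor
      · rintro ⟨k, hk, rfl⟩
        rcases lt_or_ge k d with h' | h'
        · exact Or.inl ⟨k, h', rfl⟩
        · exact Or.inr ⟨k - d, by omega, by rw [show d + (k - d) = k by omega]⟩
      · rintro (⟨k, hk, rfl⟩ | ⟨i, hi, rfl⟩)
        · exact ⟨k, by omega, rfl⟩
        · exact ⟨d + i, by omega, rfl⟩
    have himg2 : (Finset.range d).image (fun i => h (d + i))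
        = (nthRootsFinset d (1 : ℂ)).image (fun y => ρ * y) := by
      rw [← IH2, Finset.image_image]
      apply Finset.image_congr
      intro i _
      exact hgd i
    have hroots : nthRootsFinset (2 ^ (n + 1)) (1 : ℂ)
        = nthRootsFinset d (1 : ℂ) ∪ (nthRootsFinset d (1 : ℂ)).image (fun y => ρ * y) := by
      ext x
      simp only [Finset.mem_union, Finset.mem_image,
        Polynomial.mem_nthRootsFinset (by positivity : 0 < 2 ^ (n + 1)) (1 : ℂ),
        Polynomial.mem_nthRootsFinset hd0 (1 : ℂ)]
      constructor
      · intro hx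
        have hsq : x ^ d * x ^ d = 1 := by
          rw [← pow_add, ← hdd]
          exact hx
        rcases mul_self_eq_one_iff.mp hsq with h1 | h1
        · exact Or.inl h1
        · refine Or.inr ⟨ρ⁻¹ * x, ?_, by field_simp⟩
          rw [mul_pow, inv_pow, hρd, h1]
          norm_num
      · rintro (h1 | ⟨y, hy, rfl⟩)
        · rw [hdd, pow_add, h1, one_mul]
        · rw [hdd, pow_add, ← pow_add, ← hdd]
          rw [show 2 ^ (n + 1) = d * 2 by omega, pow_mul, mul_pow, hρd, hy, mul_one]
          norm_num
    rw [hsplit, himg2, IH1, ← hroots]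

lemma re_exp_pow (n i : ℕ) :
    ((Complex.exp (2 * ↑π * Complex.I / ((2 ^ (n + 1) : ℕ) : ℂ))) ^ i).re
      = Real.cos (i * π / 2 ^ n) := by
  rw [← Complex.exp_nat_mul]
  have harg : (i : ℂ) * (2 * ↑π * Complex.I / ((2 ^ (n + 1) : ℕ) : ℂ))
      = ((i * π / 2 ^ n : ℝ) : ℂ) * Complex.I := by
    have h2 : ((2 : ℂ) ^ n) ≠ 0 := pow_ne_zero _ two_ne_zero
    push_cast
    field_simp
    ring
  rw [harg, Complex.exp_ofReal_mul_I_re]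

/-- A Leja sequence for the unit disk `D = {|z| ≤ 1}`: it starts at `1`, stays in `D`,
and each point maximizes the product of distances to the previous points over `D`. -/
def IsLejaSeq (e : ℕ → ℂ) : Prop :=
  e 0 = 1 ∧ (∀ k, ‖e k‖ ≤ 1) ∧
    ∀ j, 1 ≤ j → ∀ z : ℂ, ‖z‖ ≤ 1 →
      ∏ m ∈ Finset.range j, ‖z - e m‖ ≤
        ∏ m ∈ Finset.range j, ‖e j - e m‖

theorem re_leja_section_eq_lobatto (e : ℕ → ℂ) (he : IsLejaSeq e) (n : ℕ) :
    (Finset.range (2 ^ (n + 1))).image (fun k => (e k).re) =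
      (Finset.range (2 ^ n + 1)).image (fun j : ℕ => Real.cos (j * π / 2 ^ n)) ∧
    ((Finset.range (2 ^ (n + 1))).image (fun k => (e k).re)).card = 2 ^ n + 1 := by
  obtain ⟨h0, hb, hmax⟩ := he
  have hN0 : 0 < 2 ^ (n + 1) := by positivity
  haveI : NeZero (2 ^ (n + 1)) := ⟨hN0.ne'⟩
  have himg : (Finset.range (2 ^ (n + 1))).image e = nthRootsFinset (2 ^ (n + 1)) (1 : ℂ) := by
    apply leja_struct (n + 1) ∅ (by simp) e h0 hb
    intro j hj _ z hz
    simpa using hmax j hj z hz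
  have hre : (Finset.range (2 ^ (n + 1))).image (fun k => (e k).re)
      = Finset.image Complex.re (nthRootsFinset (2 ^ (n + 1)) (1 : ℂ)) := by
    rw [← himg, Finset.image_image]
    rfl
  have hζ := Complex.isPrimitiveRoot_exp (2 ^ (n + 1)) hN0.ne'
  have hmain : Finset.image Complex.re (nthRootsFinset (2 ^ (n + 1)) (1 : ℂ))
      = (Finset.range (2 ^ n + 1)).image (fun j : ℕ => Real.cos (j * π / 2 ^ n)) := by
    ext r
    simp only [Finset.mem_image, Finset.mem_range]
    constructor
    · rintro ⟨x, hx, rfl⟩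
      have hx1 : x ^ (2 ^ (n + 1)) = 1 := (Polynomial.mem_nthRootsFinset hN0 (1 : ℂ)).mp hx
      obtain ⟨i, hiN, rfl⟩ := hζ.eq_pow_of_pow_eq_one hx1
      rw [re_exp_pow]
      rcases le_or_gt i (2 ^ n) with hi | hi
      · exact ⟨i, by omega, rfl⟩
      · refine ⟨2 ^ (n + 1) - i, by omega, ?_⟩
        have hsub : ((2 ^ (n + 1) - i : ℕ) : ℝ) = 2 ^ (n + 1) - i := by
          push_cast [Nat.cast_sub hiN.le]
          ring
        rw [hsub]
        have harg : ((2 ^ (n + 1) : ℝ) - i) * π / 2 ^ n = 2 * π - i * π / 2 ^ n := by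
          have h2 : ((2 : ℝ) ^ n) ≠ 0 := by positivity
          field_simp
          ring
        rw [harg, Real.cos_two_pi_sub]
    · rintro ⟨j, hj, rfl⟩
      refine ⟨Complex.exp (2 * ↑π * Complex.I / ((2 ^ (n + 1) : ℕ) : ℂ)) ^ j, ?_, ?_⟩
      · rw [Polynomial.mem_nthRootsFinset hN0 (1 : ℂ), ← pow_mul, mul_comm j, pow_mul,
          hζ.pow_eq_one, one_pow]
      · rw [re_exp_pow]
  have hcard : ((Finset.range (2 ^ n + 1)).image
      (fun j : ℕ => Real.cos (j * π / 2 ^ n))).card = 2 ^ n + 1 := by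
    rw [Finset.card_image_of_injOn, Finset.card_range]
    intro a ha b hbm hab
    simp only [Finset.coe_range, Set.mem_Iio] at ha hbm
    have hmem : ∀ m : ℕ, m < 2 ^ n + 1 → (m * π / 2 ^ n) ∈ Set.Icc 0 π := by
      intro m hm
      constructor
      · positivity
      · rw [div_le_iff₀ (by positivity)]
        have : (m : ℝ) ≤ 2 ^ n := by exact_mod_cast Nat.lt_succ_iff.mp hm
        nlinarith [Real.pi_pos]
    have heq := Real.injOn_cos (hmem a ha) (hmem b hbm) hab
    have hπ : π / 2 ^ n ≠ 0 := by positivity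
    have : (a : ℝ) = b := by
      rw [div_left_inj' (by positivity)] at heq
      exact mul_right_cancel₀ Real.pi_ne_zero heq
    exact_mod_cast this
  rw [hre, hmain]
  exact ⟨rfl, hcard⟩
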